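/- For an alphabet of size n ≥ 2 and positive integer l, the number ε₂(n,l) of pairs (p,q) of primitive words with |p| = 2l, |q| = l, pq non-primitive, and |√(pq)| < |q| equals the sum over divisors d of l with d ≥ 4 and d not divisible by 3 of π_n(3l/d), where π_n(k) is the number of primitive words of length k over the alphabet. -/

import Mathlib

variable {A : Type*}

/-- k-fold concatenation of a word with itself. -/
def pw (w : List A) : ℕ → List A
  | 0 => []
  | n + 1 => w ++ pw w n

/-- A nonempty word is primitive if it is not a proper power. -/
def Primitive (w : List A) : Prop :=
  w ≠ [] ∧ ∀ (v : List A) (m : ℕ), w = pw v m → m = 1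

/-- Number of primitive words of length k over an n-letter alphabet. -/
noncomputable def piw (n k : ℕ) : ℕ :=
  Nat.card {w : List (Fin n) // w.length = k ∧ Primitive w}

/-- Pairs (p,q) of primitive words with |p| = 2l, |q| = l, pq non-primitive
and |√(pq)| < |q|. -/
noncomputable def eps2 (n l : ℕ) : ℕ :=
  Nat.card {pq : List (Fin n) × List (Fin n) //
    Primitive pq.1 ∧ Primitive pq.2 ∧ pq.1.length = 2 * l ∧ pq.2.length = l ∧
    ¬ Primitive (pq.1 ++ pq.2) ∧
    ∃ (u : List (Fin n)) (e : ℕ), Primitive u ∧ pq.1 ++ pq.2 = pw u e ∧ u.length < l}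

theorem pw_zero (u : List A) : pw u 0 = [] := rfl
theorem pw_succ (u : List A) (k : ℕ) : pw u (k+1) = u ++ pw u k := rfl

theorem pw_length (u : List A) (k : ℕ) : (pw u k).length = k * u.length := by
  induction k with
  | zero => simp [pw]
  | succ k ih => simp [pw, ih]; ring

theorem pw_one (u : List A) : pw u 1 = u := by simp [pw]

theorem pw_add (u : List A) (a b : ℕ) : pw u (a+b) = pw u a ++ pw u b := by
  induction a with
  | zero => simp [pw]
  | succ a ih => rw [Nat.succ_add, pw_succ, pw_succ, ih, List.append_assoc]

/-- `w` has period `p`. -/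
def Per (w : List A) (p : ℕ) : Prop := ∀ i : ℕ, i + p < w.length → w[i]? = w[i+p]?

theorem per_take {w : List A} {p : ℕ} (h : Per w p) (n : ℕ) : Per (w.take n) p := by
  intro i hi
  simp only [List.length_take, lt_min_iff] at hi
  rw [List.getElem?_take, List.getElem?_take, if_pos (by omega), if_pos (by omega)]
  exact h i (by omega)

theorem per_drop {w : List A} {p : ℕ} (h : Per w p) (n : ℕ) : Per (w.drop n) p := by
  intro i hi
  simp only [List.length_drop] at hi
  rw [List.getElem?_drop, List.getElem?_drop, ← Nat.add_assoc]
  exact h (n + i) (by omega)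

theorem getElem?_pw (u : List A) (k : ℕ) : ∀ i, i < k * u.length →
    (pw u k)[i]? = u[i % u.length]? := by
  induction k with
  | zero => intro i h; omega
  | succ k ih =>
    intro i h
    rw [Nat.succ_mul] at h
    rcases Nat.eq_zero_or_pos u.length with h0 | hu
    · rw [h0] at h; omega
    rw [pw_succ]
    by_cases hiu : i < u.length
    · rw [List.getElem?_append (l₁ := u), if_pos hiu, Nat.mod_eq_of_lt hiu]
    · have e1 : (u ++ pw u k)[i]? = (pw u k)[i - u.length]? :=
        List.getElem?_append_right (by omega)
      have e2 := ih (i - u.length) (by omega)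
      rw [e1, e2, ← Nat.mod_eq_sub_mod (show i ≥ u.length by omega)]

theorem per_pw (u : List A) (k : ℕ) : Per (pw u k) u.length := by
  intro i hi
  rw [pw_length] at hi
  rw [getElem?_pw u k i (by omega), getElem?_pw u k (i + u.length) (by omega),
    Nat.add_mod_right]

theorem per_mod {w : List A} {g : ℕ} (h : Per w g) (hg : 0 < g) :
    ∀ i, i < w.length → w[i]? = w[i % g]? := by
  intro i
  induction i using Nat.strong_induction_on with
  | _ i IH =>
    intro hi
    by_cases hig : i < g
    · rw [Nat.mod_eq_of_lt hig]
    · have h1 := h (i - g) (by omega)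
      have h2 : i - g + g = i := by omega
      rw [h2] at h1
      have h3 := IH (i - g) (by omega) (by omega)
      rw [← h1, h3, ← Nat.mod_eq_sub_mod (show i ≥ g by omega)]

theorem eq_pw_of_per {w : List A} {g : ℕ} (h : Per w g) (hg : 0 < g) (hd : g ∣ w.length) :
    w = pw (w.take g) (w.length / g) := by
  rcases Nat.eq_zero_or_pos w.length with h0 | h0
  · rw [List.length_eq_zero_iff] at h0
    rw [h0]
    simp [pw]
  have hgle : g ≤ w.length := Nat.le_of_dvd h0 hd
  have htg : (w.take g).length = g := by rw [List.length_take]; omega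
  have hlen : (w.length / g) * (w.take g).length = w.length := by
    rw [htg, Nat.div_mul_cancel hd]
  apply List.ext_getElem?
  intro i
  by_cases hi : i < w.length
  · rw [getElem?_pw _ _ _ (by omega)]
    rw [htg, List.getElem?_take, if_pos (Nat.mod_lt i hg)]
    exact per_mod h hg i hi
  · rw [List.getElem?_eq_none (by omega), List.getElem?_eq_none (by rw [pw_length]; omega)]

theorem per_infix {w u : List A} {g : ℕ} (h : Per w g) (x y : List A)
    (hw : w = x ++ u ++ y) : Per u g := by
  have hu : u = (w.drop x.length).take u.length := by
    rw [hw, List.append_assoc, List.drop_left, List.take_left]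
  rw [hu]
  exact per_take (per_drop h _) _
theorem per_steps {v : List A} {g : ℕ} (hv : Per v g) :
    ∀ j a, a + j * g < v.length → v[a]? = v[a + j * g]? := by
  intro j
  induction j with
  | zero => intro a _; simp
  | succ j ihj =>
    intro a ha
    rw [Nat.succ_mul] at ha
    rw [Nat.succ_mul, ← Nat.add_assoc]
    rw [ihj a (by omega)]
    exact hv (a + j * g) (by omega)

theorem fw_aux : ∀ k p q (w : List A), p + q ≤ k → p ≤ q → Per w p → Per w q →
    p + q ≤ w.length + Nat.gcd p q → Per w (Nat.gcd p q) := by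
  intro k
  induction k using Nat.strong_induction_on with
  | _ k IHk =>
    intro p q w hk hpq hp hq hlen
    rcases Nat.eq_zero_or_pos p with hp0 | hp0
    · subst hp0; rw [Nat.gcd_zero_left]; exact hq
    rcases eq_or_lt_of_le hpq with heq | hlt
    · subst heq; rw [Nat.gcd_self]; exact hp
    -- 0 < p < q
    set g := Nat.gcd p q with hg
    set r := q - p with hr
    have hgr : Nat.gcd p r = g := by
      rw [hg, hr, Nat.gcd_sub_self_right (le_of_lt hlt)]
    have hgp : g ∣ p := Nat.gcd_dvd_left p q
    have hgq : g ∣ q := Nat.gcd_dvd_right p q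
    have hg0 : 0 < g := Nat.gcd_pos_of_pos_left q hp0
    have hgle : g ≤ p := Nat.le_of_dvd hp0 hgp
    have hgdr : g ∣ r := by rw [← hgr]; exact Nat.gcd_dvd_right p r
    have hrg : g ≤ r := Nat.le_of_dvd (by omega) hgdr
    have hn2p : 2 * p ≤ w.length := by omega
    have hnp : p < w.length := by omega
    set u := w.take (w.length - p) with hu
    have hul : u.length = w.length - p := by
      rw [hu, List.length_take]; omega
    have hup : Per u p := per_take hp _
    have hur : Per u r := by
      intro i hi
      rw [hul] at hi
      have e1 : u[i]? = w[i]? := by rw [hu, List.getElem?_take, if_pos (by omega)]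
      have e2 : u[i + r]? = w[i + r]? := by
        rw [hu, List.getElem?_take, if_pos (by omega)]
      have e3 := hq i (by omega)
      have e4 := hp (i + r) (by omega)
      have e5 : i + r + p = i + q := by omega
      rw [e5] at e4
      rw [e1, e2, e3, ← e4]
    have hglen : p + r ≤ u.length + Nat.gcd p r := by rw [hul, hgr]; omega
    have huper : Per u g := by
      rcases le_total p r with hle | hle
      · have := IHk q (by omega) p r u (by omega) hle hup hur hglen
        rwa [hgr] at this
      · have := IHk q (by omega) r p u (by omega) hle hur hup
          (by rw [Nat.gcd_comm]; omega)
        rwa [Nat.gcd_comm, hgr] at this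
    -- extension to w
    intro i
    induction i using Nat.strong_induction_on with
    | _ i IHi =>
      intro hig
      by_cases h1 : i + g < w.length - p
      · have := huper i (by omega)
        have e1 : u[i]? = w[i]? := by rw [hu, List.getElem?_take, if_pos (by omega)]
        have e2 : u[i + g]? = w[i + g]? := by
          rw [hu, List.getElem?_take, if_pos (by omega)]
        rw [← e1, ← e2]; exact this
      · by_cases h2 : p ≤ i
        · have e1 := hp (i - p) (by omega)
          have e1' : i - p + p = i := by omega
          rw [e1'] at e1
          have e2 := hp (i - p + g) (by omega)
          have e2' : i - p + g + p = i + g := by omega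
          rw [e2'] at e2
          have e3 := IHi (i - p) (by omega) (by omega)
          have e3' : i - p + g = i + g - p := by omega
          rw [← e1, e3, ← e2, e3']
        · -- i < p ∧ i + g ≥ w.length - p
          have hip : i + g ≥ p := by omega
          have e2 := hp (i + g - p) (by omega)
          have e2' : i + g - p + p = i + g := by omega
          rw [e2'] at e2
          have hjg : (p / g - 1) * g = p - g := by
            have hdiv : g * (p / g) = p := Nat.mul_div_cancel' hgp
            rw [Nat.sub_mul, one_mul, Nat.mul_comm (p / g) g, hdiv]
          have hchain := per_steps huper (p / g - 1) (i + g - p)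
            (by rw [hjg, hul]; omega)
          rw [hjg] at hchain
          have hidx : i + g - p + (p - g) = i := by omega
          rw [hidx] at hchain
          have e4 : u[i + g - p]? = w[i + g - p]? := by
            rw [hu, List.getElem?_take, if_pos (by omega)]
          have e5 : u[i]? = w[i]? := by
            rw [hu, List.getElem?_take, if_pos (by omega)]
          rw [← e5, ← hchain, e4, e2]

theorem fine_wilf {w : List A} {p q : ℕ} (hp : Per w p) (hq : Per w q)
    (h : p + q ≤ w.length + Nat.gcd p q) : Per w (Nat.gcd p q) := by
  rcases le_total p q with h' | h'
  · exact fw_aux (p + q) p q w le_rfl h' hp hq h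
  · rw [Nat.gcd_comm]
    exact fw_aux (q + p) q p w le_rfl h' hq hp (by rw [Nat.gcd_comm]; omega)
theorem prim_ne_nil {u : List A} (hu : Primitive u) : u ≠ [] := hu.1

theorem prim_len_pos {u : List A} (hu : Primitive u) : 0 < u.length :=
  List.length_pos_iff.mpr hu.1

/-- If a primitive word has a period dividing its length, the period is full. -/
theorem prim_per_eq {u : List A} {g : ℕ} (hu : Primitive u) (hper : Per u g)
    (hg : 0 < g) (hdvd : g ∣ u.length) : g = u.length := by
  have h := eq_pw_of_per hper hg hdvd
  have h1 := hu.2 _ _ h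
  have h2 : g * (u.length / g) = u.length := Nat.mul_div_cancel' hdvd
  rw [h1] at h2
  omega

/-- Main combinatorial lemma: a word with a primitive "root factor" whose length
does not divide the total length is primitive, under a Fine–Wilf size condition. -/
theorem prim_factor {u w : List A} (hu : Primitive u) (hper : Per w u.length)
    (hocc : ∃ x y, w = x ++ u ++ y) (hndvd : ¬ u.length ∣ w.length)
    (harith : ∀ z, z ∣ w.length → 2 * z ≤ w.length →
      u.length + z ≤ w.length + Nat.gcd u.length z) :
    Primitive w := by
  have hw0 : w.length ≠ 0 := fun h => hndvd (h ▸ dvd_zero _)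
  constructor
  · intro h; rw [h] at hw0; exact hw0 rfl
  · intro z m hzm
    rcases m with _ | m
    · rw [hzm] at hw0; exact absurd rfl hw0
    rcases m with _ | m
    · rfl
    exfalso
    have hlen : w.length = (m + 2) * z.length := by rw [hzm, pw_length]
    have hzdvd : z.length ∣ w.length := ⟨m + 2, by rw [hlen]; ring⟩
    have hz2 : 2 * z.length ≤ w.length := by
      rw [hlen]; nlinarith [z.length.zero_le]
    have hperz : Per w z.length := by rw [hzm]; exact per_pw z (m + 2)
    have hFW := fine_wilf hper hperz (harith z.length hzdvd hz2)
    obtain ⟨x, y, hxy⟩ := hocc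
    have hug : Per u (Nat.gcd u.length z.length) := per_infix hFW x y hxy
    have hg0 : 0 < Nat.gcd u.length z.length :=
      Nat.gcd_pos_of_pos_left _ (prim_len_pos hu)
    have hgeq := prim_per_eq hu hug hg0 (Nat.gcd_dvd_left _ _)
    have : u.length ∣ z.length := hgeq ▸ Nat.gcd_dvd_right u.length z.length
    exact hndvd (this.trans hzdvd)

/-- Uniqueness of the primitive root. -/
theorem prim_root_unique {u v : List A} {e f : ℕ} (hu : Primitive u) (hv : Primitive v)
    (he : 1 ≤ e) (hf : 1 ≤ f) (h : pw u e = pw v f) : u = v := by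
  have hu0 := prim_len_pos hu
  have hv0 := prim_len_pos hv
  rcases eq_or_lt_of_le he with he1 | he2
  · rw [← he1, pw_one] at h
    have hf1 := hu.2 v f h
    rw [h, hf1, pw_one]
  rcases eq_or_lt_of_le hf with hf1 | hf2
  · rw [← hf1, pw_one] at h
    have he1 := hv.2 u e h.symm
    omega
  set w := pw u e with hw
  have hlenu : w.length = e * u.length := pw_length u e
  have hlenv : w.length = f * v.length := by rw [h, pw_length]
  have hpu : Per w u.length := per_pw u e
  have hpv : Per w v.length := by rw [h]; exact per_pw v f
  have hsize : u.length + v.length ≤ w.length + Nat.gcd u.length v.length := by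
    have h1 : 2 * u.length ≤ w.length := by rw [hlenu]; nlinarith
    have h2 : 2 * v.length ≤ w.length := by rw [hlenv]; nlinarith
    omega
  have hFW := fine_wilf hpu hpv hsize
  have hg0 : 0 < Nat.gcd u.length v.length := Nat.gcd_pos_of_pos_left _ hu0
  have hwu : w = u ++ pw u (e - 1) := by
    have h3 : pw u e = pw u (1 + (e - 1)) := by congr 1; omega
    rw [hw, h3, pw_add, pw_one]
  have hwv : w = v ++ pw v (f - 1) := by
    have h3 : pw v f = pw v (1 + (f - 1)) := by congr 1; omega
    rw [h, h3, pw_add, pw_one]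
  have hoccu : w = [] ++ u ++ pw u (e - 1) := by rw [hwu]; rfl
  have hoccv : w = [] ++ v ++ pw v (f - 1) := by rw [hwv]; rfl
  have hgu := prim_per_eq hu (per_infix hFW _ _ hoccu) hg0 (Nat.gcd_dvd_left _ _)
  have hgv := prim_per_eq hv (per_infix hFW _ _ hoccv) hg0 (Nat.gcd_dvd_right _ _)
  have htu : u = w.take u.length := by rw [hwu, List.take_left]
  have htv : v = w.take v.length := by rw [hwv, List.take_left]
  have hl : u.length = v.length := by omega
  rw [htu, htv, hl]

/-- The arithmetic inequality needed for Fine–Wilf in the hard case. -/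
theorem nt_ineq (l d t z : ℕ) (h3 : ¬ 3 ∣ d) (h4 : 4 ≤ d)
    (hu : d * t = 3 * l) (hz : z ∣ l) (hz2 : 2 * z ≤ l) :
    t + z ≤ l + Nat.gcd t z := by
  rcases Nat.eq_zero_or_pos z with hz0 | hz0
  · subst hz0; rw [Nat.gcd_zero_right]; omega
  obtain ⟨m, hm⟩ := hz
  have hm2 : 2 ≤ m := by nlinarith
  by_cases hd4 : d = 4
  · subst hd4
    by_cases hm4 : 4 ≤ m
    · have : 4 * z ≤ l := by nlinarith
      omega
    · interval_cases m
      · -- m = 2 : l = 2z, 4t = 6z, 2t = 3z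
        have h2t : 2 * t = 3 * z := by omega
        have hzev : z % 2 = 0 := by omega
        obtain ⟨s, hs⟩ : ∃ s, z = 2 * s := ⟨z / 2, by omega⟩
        have ht : t = 3 * s := by omega
        have : Nat.gcd t z = s := by
          rw [ht, hs, Nat.mul_comm 3 s, Nat.mul_comm 2 s, Nat.gcd_mul_left]
          norm_num
        omega
      · -- m = 3 : l = 3z, 4t = 9z
        have h4t : 4 * t = 9 * z := by omega
        have hz4 : z % 4 = 0 := by omega
        obtain ⟨s, hs⟩ : ∃ s, z = 4 * s := ⟨z / 4, by omega⟩
        have ht : t = 9 * s := by omega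
        have : Nat.gcd t z = s := by
          rw [ht, hs, Nat.mul_comm 9 s, Nat.mul_comm 4 s, Nat.gcd_mul_left]
          norm_num
        omega
  by_cases hd5 : d = 5
  · subst hd5
    by_cases hm3 : 3 ≤ m
    · have h1 : 3 * z ≤ l := by nlinarith
      omega
    · interval_cases m
      -- m = 2 : l = 2z, 5t = 6z
      have h5t : 5 * t = 6 * z := by omega
      have hz5 : z % 5 = 0 := by omega
      obtain ⟨s, hs⟩ : ∃ s, z = 5 * s := ⟨z / 5, by omega⟩
      have ht : t = 6 * s := by omega
      have : Nat.gcd t z = s := by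
        rw [ht, hs, Nat.mul_comm 6 s, Nat.mul_comm 5 s, Nat.gcd_mul_left]
        norm_num
      omega
  · -- d ≥ 6
    have hd6 : 6 ≤ d := by omega
    have h1 : 6 * t ≤ 3 * l := by nlinarith
    omega
theorem take_prim {u : List A} (hu : Primitive u) {d l : ℕ} (hl : 0 < l)
    (h3 : ¬ 3 ∣ d) (h4 : 4 ≤ d) (ht : d * u.length = 3 * l) :
    Primitive ((pw u d).take (2 * l)) := by
  have ht0 : 0 < u.length := prim_len_pos hu
  have h4t : 4 * u.length ≤ 3 * l := by nlinarith
  have hwlen : (pw u d).length = 3 * l := by rw [pw_length]; exact ht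
  have hplen : ((pw u d).take (2 * l)).length = 2 * l := by
    rw [List.length_take]; omega
  apply prim_factor hu
  · exact per_take (per_pw u d) _
  · refine ⟨[], (pw u (d - 1)).take (2 * l - u.length), ?_⟩
    have hsp : pw u d = u ++ pw u (d - 1) := by
      have h3' : pw u d = pw u (1 + (d - 1)) := by congr 1; omega
      rw [h3', pw_add, pw_one]
    rw [hsp, List.take_append, List.take_of_length_le (by omega),
      List.nil_append]
  · rw [hplen]
    rintro ⟨k, hk⟩
    have h2d : 2 * d = 3 * k := by
      have h1 : (2 * d) * u.length = (3 * k) * u.length := by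
        calc (2 * d) * u.length = 2 * (d * u.length) := by ring
        _ = 2 * (3 * l) := by rw [ht]
        _ = 3 * (2 * l) := by ring
        _ = 3 * (u.length * k) := by rw [hk]
        _ = (3 * k) * u.length := by ring
      exact Nat.eq_of_mul_eq_mul_right ht0 h1
    exact h3 (by omega)
  · intro z hz hz2
    rw [hplen] at hz hz2 ⊢
    have : z ≤ l := by omega
    have : u.length + z ≤ 2 * l := by omega
    omega

theorem drop_prim {u : List A} (hu : Primitive u) {d l : ℕ} (hl : 0 < l)
    (h3 : ¬ 3 ∣ d) (h4 : 4 ≤ d) (ht : d * u.length = 3 * l) :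
    Primitive ((pw u d).drop (2 * l)) := by
  have ht0 : 0 < u.length := prim_len_pos hu
  have h4t : 4 * u.length ≤ 3 * l := by nlinarith
  have hwlen : (pw u d).length = 3 * l := by rw [pw_length]; exact ht
  have hqlen : ((pw u d).drop (2 * l)).length = l := by
    rw [List.length_drop]; omega
  apply prim_factor hu
  · exact per_drop (per_pw u d) _
  · refine ⟨(pw u (d - 1)).drop (2 * l), [], ?_⟩
    have hsp : pw u d = pw u (d - 1) ++ u := by
      have h3' : pw u d = pw u ((d - 1) + 1) := by congr 1; omega
      rw [h3', pw_add, pw_one]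
    have hAlen : (pw u (d - 1)).length = 3 * l - u.length := by
      rw [pw_length]
      have h5 : (d - 1) * u.length + u.length = d * u.length := by
        rw [← Nat.succ_mul]
        congr 1
        omega
      omega
    have hz2l : 2 * l - (3 * l - u.length) = 0 := by omega
    rw [hsp, List.drop_append, hAlen, hz2l, List.drop_zero,
      List.append_nil]
  · rw [hqlen]
    rintro ⟨k, hk⟩
    have hdd : d = 3 * k := by
      have h' : d * u.length = (3 * k) * u.length := by
        rw [ht, hk]; ring
      exact Nat.eq_of_mul_eq_mul_right ht0 h'
    exact h3 ⟨k, hdd⟩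
  · intro z hz hz2
    rw [hqlen] at hz hz2 ⊢
    exact nt_ineq l d u.length z h3 h4 ht hz hz2

theorem build_mem {n l d : ℕ} (hl : 0 < l) (h3 : ¬ 3 ∣ d) (h4 : 4 ≤ d)
    {u : List (Fin n)} (hu : Primitive u) (ht : d * u.length = 3 * l) :
    Primitive ((pw u d).take (2 * l)) ∧ Primitive ((pw u d).drop (2 * l)) ∧
    ((pw u d).take (2 * l)).length = 2 * l ∧ ((pw u d).drop (2 * l)).length = l ∧
    ¬ Primitive ((pw u d).take (2 * l) ++ (pw u d).drop (2 * l)) ∧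
    ∃ (v : List (Fin n)) (e : ℕ), Primitive v ∧
      (pw u d).take (2 * l) ++ (pw u d).drop (2 * l) = pw v e ∧ v.length < l := by
  have ht0 : 0 < u.length := prim_len_pos hu
  have h4t : 4 * u.length ≤ 3 * l := by nlinarith
  have hwlen : (pw u d).length = 3 * l := by rw [pw_length]; exact ht
  have htd : (pw u d).take (2 * l) ++ (pw u d).drop (2 * l) = pw u d :=
    List.take_append_drop _ _
  refine ⟨take_prim hu hl h3 h4 ht, drop_prim hu hl h3 h4 ht, ?_, ?_, ?_,
    u, d, hu, htd, ?_⟩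
  · rw [List.length_take]; omega
  · rw [List.length_drop]; omega
  · rw [htd]; intro hP; have := hP.2 u d rfl; omega
  · omega

theorem eps2_eq_sum (n l : ℕ) (hn : 2 ≤ n) (hl : 0 < l) :
    eps2 n l = ∑ d ∈ l.divisors.filter (fun d => 4 ≤ d ∧ ¬ 3 ∣ d), piw n (3 * l / d) := by
  classical
  have hl0 : l ≠ 0 := hl.ne'
  set F := l.divisors.filter (fun d => 4 ≤ d ∧ ¬ 3 ∣ d) with hF
  have hmem : ∀ d ∈ F, d ∣ l ∧ 4 ≤ d ∧ ¬ 3 ∣ d := by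
    intro d hd
    rw [hF, Finset.mem_filter, Nat.mem_divisors] at hd
    exact ⟨hd.1.1, hd.2⟩
  have hkey : ∀ d ∈ F, ∀ w : List (Fin n), w.length = 3 * l / d →
      d * w.length = 3 * l := by
    intro d hd w hw
    rw [hw]
    exact Nat.mul_div_cancel' ((hmem d hd).1.mul_left 3)
  let fib : ℕ → Type := fun d => {w : List (Fin n) // w.length = 3 * l / d ∧ Primitive w}
  let T := (d : {x // x ∈ F}) × fib d.1
  let S := {pq : List (Fin n) × List (Fin n) //
    Primitive pq.1 ∧ Primitive pq.2 ∧ pq.1.length = 2 * l ∧ pq.2.length = l ∧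
    ¬ Primitive (pq.1 ++ pq.2) ∧
    ∃ (u : List (Fin n)) (e : ℕ), Primitive u ∧ pq.1 ++ pq.2 = pw u e ∧ u.length < l}
  let G : T → S := fun x =>
    ⟨((pw x.2.1 x.1.1).take (2 * l), (pw x.2.1 x.1.1).drop (2 * l)), by
      obtain ⟨⟨d, hd⟩, u, hul, hup⟩ := x
      exact build_mem hl (hmem d hd).2.2 (hmem d hd).2.1 hup (hkey d hd u hul)⟩
  have hinj : Function.Injective G := by
    rintro ⟨⟨d₁, hd₁⟩, u₁, hul₁, hup₁⟩ ⟨⟨d₂, hd₂⟩, u₂, hul₂, hup₂⟩ hGeq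
    have hpair := congrArg Subtype.val hGeq
    have h1 : (pw u₁ d₁).take (2 * l) = (pw u₂ d₂).take (2 * l) :=
      congrArg Prod.fst hpair
    have h2 : (pw u₁ d₁).drop (2 * l) = (pw u₂ d₂).drop (2 * l) :=
      congrArg Prod.snd hpair
    have hw : pw u₁ d₁ = pw u₂ d₂ := by
      rw [← List.take_append_drop (2 * l) (pw u₁ d₁), h1, h2, List.take_append_drop]
    have h4₁ := (hmem d₁ hd₁).2.1
    have h4₂ := (hmem d₂ hd₂).2.1
    have huu : u₁ = u₂ := prim_root_unique hup₁ hup₂ (by omega) (by omega) hw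
    subst huu
    have ht₁ := hkey d₁ hd₁ u₁ hul₁
    have ht₂ := hkey d₂ hd₂ u₁ hul₂
    have ht0 : 0 < u₁.length := prim_len_pos hup₁
    have hdd : d₁ = d₂ := by
      have h5 : d₁ * u₁.length = d₂ * u₁.length := by omega
      exact Nat.eq_of_mul_eq_mul_right ht0 h5
    subst hdd
    rfl
  have hsurj : Function.Surjective G := by
    rintro ⟨⟨p, q⟩, hp, hq, hlp, hlq, hnp, u, e, hup, heq, hul⟩
    have ht0 : 0 < u.length := prim_len_pos hup
    have hlen3 : e * u.length = 3 * l := by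
      have h6 := congrArg List.length heq
      rw [List.length_append, hlp, hlq, pw_length] at h6
      omega
    have he4 : 4 ≤ e := by
      by_contra hlt
      push_neg at hlt
      have : e * u.length ≤ 3 * u.length := Nat.mul_le_mul_right _ (by omega)
      omega
    have h3e : ¬ 3 ∣ e := by
      rintro ⟨k, hk⟩
      subst hk
      have hlen3' : 3 * (k * u.length) = 3 * l := by rw [← hlen3]; ring
      have hkl : k * u.length = l := by omega
      have hq' : q = pw u k := by
        have hsplit : pw u (3 * k) = pw u (2 * k) ++ pw u k := by
          rw [← pw_add]; congr 1; omega
        have hlen2 : (pw u (2 * k)).length = 2 * l := by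
          rw [pw_length]
          calc 2 * k * u.length = 2 * (k * u.length) := by ring
          _ = 2 * l := by rw [hkl]
        calc q = (p ++ q).drop p.length := (List.drop_left (l₁ := p) (l₂ := q)).symm
        _ = (pw u (3 * k)).drop (2 * l) := by rw [heq, hlp]
        _ = pw u k := by rw [hsplit, List.drop_left' hlen2]
      have hk1 := hq.2 u k hq'
      rw [hk1, one_mul] at hkl
      omega
    have hedvd : e ∣ l := by
      have hco : Nat.Coprime 3 e :=
        (Nat.Prime.coprime_iff_not_dvd (by norm_num)).mpr h3e
      have h3l : e ∣ 3 * l := ⟨u.length, hlen3.symm⟩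
      exact Nat.Coprime.dvd_of_dvd_mul_left (Nat.Coprime.symm hco) h3l
    have heF : e ∈ F := by
      rw [hF, Finset.mem_filter, Nat.mem_divisors]
      exact ⟨⟨hedvd, hl0⟩, he4, h3e⟩
    have hulen : u.length = 3 * l / e := by
      rw [← hlen3, Nat.mul_div_cancel_left _ (show 0 < e by omega)]
    refine ⟨⟨⟨e, heF⟩, ⟨u, hulen, hup⟩⟩, ?_⟩
    apply Subtype.ext
    show ((pw u e).take (2 * l), (pw u e).drop (2 * l)) = (p, q)
    rw [← heq, ← hlp, List.take_left, List.drop_left]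
  have hcard : eps2 n l = Nat.card T :=
    (Nat.card_congr (Equiv.ofBijective G ⟨hinj, hsurj⟩)).symm
  haveI hfib : ∀ d : ℕ, Finite (fib d) := by
    intro d
    haveI hfin : Finite ({w : List (Fin n) | w.length = 3 * l / d} : Set _) :=
      Set.Finite.to_subtype (List.finite_length_eq _ _)
    refine Finite.of_injective
      (fun w => (⟨w.1, w.2.1⟩ : {x : List (Fin n) | x.length = 3 * l / d})) ?_
    intro a b hab
    have h2 := congrArg Subtype.val hab
    exact Subtype.ext h2
  haveI hfty : ∀ d : {x // x ∈ F}, Fintype (fib d.1) := fun d => Fintype.ofFinite _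
  rw [hcard, Nat.card_eq_fintype_card, Fintype.card_sigma,
    ← Finset.sum_coe_sort F (fun d => piw n (3 * l / d))]
  exact Finset.sum_congr rfl (fun d _ => Nat.card_eq_fintype_card.symm)
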